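/- Let G be an irreducible finite subgroup of GL(V) and Λ a nonzero G-invariant lattice in V. Then the field Q(χ_{G,V}) generated over Q by the traces of the elements of G is either Q or an imaginary quadratic number field. -/

import Mathlib

open Module

universe u

private lemma aux_schur {V : Type*} [NormedAddCommGroup V] [NormedSpace ℂ V]
    [FiniteDimensional ℂ V] [Nontrivial V]
    (G : Subgroup (Module.End ℂ V)ˣ)
    (hirr : ∀ W : Submodule ℂ V,
      (∀ g ∈ G, ∀ v ∈ W, (g : Module.End ℂ V) v ∈ W) → W = ⊥ ∨ W = ⊤)
    (f : Module.End ℂ V)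
    (hf : ∀ g ∈ G, (g : Module.End ℂ V) * f = f * (g : Module.End ℂ V)) :
    ∃ c : ℂ, f = c • 1 := by
  obtain ⟨c, hc⟩ := Module.End.exists_eigenvalue f
  refine ⟨c, ?_⟩
  have hinv : ∀ g ∈ G, ∀ v ∈ f.eigenspace c, (g : Module.End ℂ V) v ∈ f.eigenspace c := by
    intro g hg v hv
    rw [Module.End.mem_eigenspace_iff] at hv ⊢
    have : f ((g : Module.End ℂ V) v) = (g : Module.End ℂ V) (f v) := by
      have := hf g hg
      calc f ((g : Module.End ℂ V) v) = (f * (g : Module.End ℂ V)) v := rfl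
        _ = ((g : Module.End ℂ V) * f) v := by rw [this]
        _ = (g : Module.End ℂ V) (f v) := rfl
    rw [this, hv, map_smul]
  rcases hirr _ hinv with h | h
  · exact absurd h (Module.End.hasEigenvalue_iff.mp hc)
  · ext v
    have hv : v ∈ f.eigenspace c := h ▸ Submodule.mem_top
    rw [Module.End.mem_eigenspace_iff] at hv
    simpa using hv

private lemma aux_traceField {V : Type*} [NormedAddCommGroup V] [NormedSpace ℂ V]
    [FiniteDimensional ℂ V] [Nontrivial V]
    (G : Subgroup (Module.End ℂ V)ˣ) [Finite G]
    (hirr : ∀ W : Submodule ℂ V,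
      (∀ g ∈ G, ∀ v ∈ W, (g : Module.End ℂ V) v ∈ W) → W = ⊥ ∨ W = ⊤)
    [Algebra ℚ (Module.End ℂ V)] [IsScalarTower ℚ ℂ (Module.End ℂ V)] :
    ∃ Ks : Subfield ℂ,
      (∀ k : ↥G, LinearMap.trace ℂ V ((k : (Module.End ℂ V)ˣ) : Module.End ℂ V) ∈ Ks) ∧
      (∀ z ∈ Ks, z • (1 : Module.End ℂ V) ∈
        Submodule.span ℚ (Set.range (fun k : ↥G => ((k : (Module.End ℂ V)ˣ) : Module.End ℂ V)))) := by
  classical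
  haveI : Fintype ↥G := Fintype.ofFinite _
  set Gs : Set (Module.End ℂ V) :=
    Set.range (fun k : ↥G => ((k : (Module.End ℂ V)ˣ) : Module.End ℂ V)) with hGs
  set Asub : Submodule ℚ (Module.End ℂ V) := Submodule.span ℚ Gs with hAsub
  have h1 : (1 : Module.End ℂ V) ∈ Asub := Submodule.subset_span ⟨(1 : ↥G), rfl⟩
  have hmul : ∀ x y : Module.End ℂ V, x ∈ Asub → y ∈ Asub → x * y ∈ Asub := by
    have hmulG : ∀ x ∈ Gs, ∀ y ∈ Asub, x * y ∈ Asub := by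
      rintro x ⟨k, rfl⟩ y hy
      induction hy using Submodule.span_induction with
      | mem z hz =>
        obtain ⟨k', rfl⟩ := hz
        exact Submodule.subset_span ⟨k * k', by push_cast; rfl⟩
      | zero => simp
      | add a b _ _ ha hb => rw [mul_add]; exact Submodule.add_mem _ ha hb
      | smul q a _ ha => rw [mul_smul_comm]; exact Submodule.smul_mem _ _ ha
    intro x y hx hy
    induction hx using Submodule.span_induction with
    | mem z hz => exact hmulG z hz y hy
    | zero => simp
    | add a b _ _ ha hb => rw [add_mul]; exact Submodule.add_mem _ ha hb
    | smul q a _ ha => rw [smul_mul_assoc]; exact Submodule.smul_mem _ _ ha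
  set AS : Subalgebra ℚ (Module.End ℂ V) := Asub.toSubalgebra h1 hmul with hAS
  set φ : ℂ →ₐ[ℚ] Module.End ℂ V := (Algebra.ofId ℂ (Module.End ℂ V)).restrictScalars ℚ with hφ
  set KA : Subalgebra ℚ ℂ := AS.comap φ with hKA
  have hKAmem : ∀ z : ℂ, z ∈ KA ↔ z • (1 : Module.End ℂ V) ∈ Asub := by
    intro z
    rw [hKA, Subalgebra.mem_comap]
    rw [show φ z = z • (1 : Module.End ℂ V) from (Algebra.algebraMap_eq_smul_one z)]
    rfl
  -- traces lie in KA
  have htr : ∀ k : ↥G,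
      LinearMap.trace ℂ V ((k : (Module.End ℂ V)ˣ) : Module.End ℂ V) ∈ KA := by
    intro k
    set zg : Module.End ℂ V :=
      ∑ u : ↥G, (((u * k * u⁻¹ : ↥G) : (Module.End ℂ V)ˣ) : Module.End ℂ V) with hzg
    have hcomm : ∀ g ∈ G, (g : Module.End ℂ V) * zg = zg * (g : Module.End ℂ V) := by
      intro g hg
      lift g to ↥G using hg
      rw [hzg, Finset.mul_sum, Finset.sum_mul]
      refine Fintype.sum_equiv (Equiv.mulLeft g) _ _ (fun u => ?_)
      have : (g : ↥G) * (u * k * u⁻¹) = ((g * u) * k * (g * u)⁻¹) * g := by group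
      calc ((g : (Module.End ℂ V)ˣ) : Module.End ℂ V) * ((u * k * u⁻¹ : ↥G) : (Module.End ℂ V)ˣ)
            = (((g * (u * k * u⁻¹) : ↥G) : (Module.End ℂ V)ˣ) : Module.End ℂ V) := by push_cast; rfl
        _ = ((((g * u) * k * (g * u)⁻¹) * g : ↥G) : (Module.End ℂ V)ˣ) := by rw [this]
        _ = ((((Equiv.mulLeft g) u * k * ((Equiv.mulLeft g) u)⁻¹ : ↥G) : (Module.End ℂ V)ˣ) : Module.End ℂ V) *
              ((g : (Module.End ℂ V)ˣ) : Module.End ℂ V) := by push_cast; rfl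
    obtain ⟨c, hc⟩ := aux_schur G hirr zg hcomm
    have hczg : c • (1 : Module.End ℂ V) ∈ Asub := by
      rw [← hc, hzg]
      exact Submodule.sum_mem _ (fun u _ => Submodule.subset_span ⟨u * k * u⁻¹, rfl⟩)
    have hcKA : c ∈ KA := (hKAmem c).mpr hczg
    have h1' : LinearMap.trace ℂ V zg =
        (Fintype.card ↥G : ℂ) * LinearMap.trace ℂ V ((k : (Module.End ℂ V)ˣ) : Module.End ℂ V) := by
      rw [hzg, map_sum]
      rw [Finset.sum_congr rfl (fun u _ => ?_), Finset.sum_const, Finset.card_univ,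
        nsmul_eq_mul]
      calc LinearMap.trace ℂ V (((u * k * u⁻¹ : ↥G) : (Module.End ℂ V)ˣ) : Module.End ℂ V)
          = LinearMap.trace ℂ V
            ((((u : (Module.End ℂ V)ˣ) : Module.End ℂ V) * ((k : (Module.End ℂ V)ˣ) : Module.End ℂ V)) *
              (((u⁻¹ : ↥G) : (Module.End ℂ V)ˣ) : Module.End ℂ V)) := by push_cast; rw [mul_assoc]
        _ = LinearMap.trace ℂ V
            ((((u⁻¹ : ↥G) : (Module.End ℂ V)ˣ) : Module.End ℂ V) *
              (((u : (Module.End ℂ V)ˣ) : Module.End ℂ V) * ((k : (Module.End ℂ V)ˣ) : Module.End ℂ V))) := by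
            rw [LinearMap.trace_mul_comm]
        _ = LinearMap.trace ℂ V ((k : (Module.End ℂ V)ˣ) : Module.End ℂ V) := by
            rw [← mul_assoc]
            norm_cast
            rw [inv_mul_cancel, one_mul]
    have h2' : LinearMap.trace ℂ V zg = c * (finrank ℂ V : ℂ) := by
      rw [hc, map_smul, LinearMap.trace_one, smul_eq_mul]
    have hn : (finrank ℂ V : ℂ) ≠ 0 :=
      Nat.cast_ne_zero.mpr (Nat.pos_iff_ne_zero.mp (Module.finrank_pos (R := ℂ) (M := V)))
    have hcard : (Fintype.card ↥G : ℂ) ≠ 0 := Nat.cast_ne_zero.mpr Fintype.card_ne_zero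
    have heq : LinearMap.trace ℂ V ((k : (Module.End ℂ V)ˣ) : Module.End ℂ V)
        = ((finrank ℂ V : ℚ) / (Fintype.card ↥G : ℚ) : ℚ) • c := by
      have h3 := h1'.symm.trans h2'
      rw [Rat.smul_def]
      push_cast
      field_simp
      linear_combination h3
    rw [heq]
    exact KA.smul_mem hcKA _
  have hphi1 : ∀ z : ℂ, φ z = z • (1 : Module.End ℂ V) := fun z =>
    Algebra.algebraMap_eq_smul_one z
  have hsmul1inj : ∀ z w : ℂ, z • (1 : Module.End ℂ V) = w • 1 → z = w := by
    intro z w hzw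
    obtain ⟨v, hv⟩ := exists_ne (0 : V)
    have h2 : z • v = w • v := by
      have := congrArg (fun f : Module.End ℂ V => f v) hzw
      simpa using this
    have h3 : (z - w) • v = 0 := by rw [sub_smul, h2, sub_self]
    rcases smul_eq_zero.mp h3 with h | h
    · exact sub_eq_zero.mp h
    · exact absurd h hv
  haveI hFDA : FiniteDimensional ℚ ↥Asub := FiniteDimensional.span_of_finite ℚ (Set.finite_range _)
  haveI hFDKA : FiniteDimensional ℚ ↥KA := by
    have hmem : ∀ x : ↥(Subalgebra.toSubmodule KA), φ (x : ℂ) ∈ Asub := by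
      intro x
      exact x.2
    set ψ : ↥(Subalgebra.toSubmodule KA) →ₗ[ℚ] ↥Asub :=
      LinearMap.codRestrict Asub (φ.toLinearMap.domRestrict (Subalgebra.toSubmodule KA)) hmem with hψ
    have hinj : Function.Injective ψ := by
      intro x y hxy
      have hx : φ (x : ℂ) = φ (y : ℂ) := congrArg Subtype.val hxy
      rw [hphi1, hphi1] at hx
      exact Subtype.ext (hsmul1inj _ _ hx)
    exact FiniteDimensional.of_injective ψ hinj
  haveI : Algebra.IsIntegral ℚ ↥KA := Algebra.IsIntegral.of_finite ℚ ↥KA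
  have hKinv : ∀ z ∈ KA, z⁻¹ ∈ KA := fun z hz => Algebra.IsIntegral.inv_mem hz
  refine ⟨(KA.toIntermediateField hKinv).toSubfield, fun k => htr k, fun z hz => ?_⟩
  exact (hKAmem z).mp hz

private lemma aux_lattice {V : Type u} [NormedAddCommGroup V] [NormedSpace ℝ V]
    [FiniteDimensional ℝ V]
    (Λ : AddSubgroup V) [DiscreteTopology Λ] : ∃ (ι : Type u) (_ : Fintype ι) (v : ι → V),
      (∀ i, v i ∈ Λ) ∧ LinearIndependent ℝ v ∧
      Submodule.span ℤ (Set.range v) = AddSubgroup.toIntSubmodule Λ ∧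
      Fintype.card ι = finrank ℝ ↥(Submodule.span ℝ (Λ : Set V)) := by
  classical
  set L : Submodule ℤ V := AddSubgroup.toIntSubmodule Λ with hL
  have hLset : (L : Set V) = (Λ : Set V) := rfl
  set U : Submodule ℝ V := Submodule.span ℝ (Λ : Set V) with hU
  set f : ↥U →ₗ[ℝ] V := U.subtype with hf
  set L₀ : Submodule ℤ ↥U := L.comap (f.restrictScalars ℤ) with hL₀
  have h_img : f '' L₀ = L := by
    rw [← LinearMap.coe_restrictScalars ℤ f, ← Submodule.map_coe (f.restrictScalars ℤ),
      Submodule.map_comap_eq_self]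
    exact fun x hx ↦ LinearMap.mem_range.mpr ⟨⟨x, Submodule.subset_span hx⟩, rfl⟩
  haveI : DiscreteTopology ↥L := ‹DiscreteTopology ↥Λ›
  haveI : DiscreteTopology ↥L₀ := by
    refine DiscreteTopology.preimage_of_continuous_injective (L : Set V) ?_
      (Submodule.injective_subtype _)
    exact LinearMap.continuous_of_finiteDimensional f
  haveI : IsZLattice ℝ L₀ := ⟨by
    rw [← (Submodule.map_injective_of_injective (Submodule.injective_subtype U)).eq_iff,
      Submodule.map_span, Submodule.map_top, Submodule.range_subtype, h_img, hLset]⟩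
  haveI : Module.Finite ℤ ↥L₀ := ZLattice.module_finite ℝ L₀
  haveI : Module.Free ℤ ↥L₀ := ZLattice.module_free ℝ L₀
  set ι := Module.Free.ChooseBasisIndex ℤ ↥L₀ with hι
  haveI : Fintype ι := inferInstance
  set b₀ : Basis ι ℤ ↥L₀ := Module.Free.chooseBasis ℤ ↥L₀ with hb₀
  set bU : Basis ι ℝ ↥U := b₀.ofZLatticeBasis ℝ L₀ with hbU
  set v : ι → V := fun i => ((bU i : ↥U) : V) with hv
  refine ⟨ι, inferInstance, v, ?_, ?_, ?_, ?_⟩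
  · intro i
    have h1 : bU i = ((b₀ i : ↥L₀) : ↥U) := b₀.ofZLatticeBasis_apply ℝ L₀ i
    have h2 : (((b₀ i : ↥L₀) : ↥U) : V) ∈ Λ := (b₀ i).2
    show ((bU i : ↥U) : V) ∈ Λ
    rw [h1]
    exact h2
  · exact bU.linearIndependent.map' U.subtype (Submodule.ker_subtype _)
  · have h3 : Submodule.span ℤ (Set.range (bU : ι → ↥U)) = L₀ := b₀.ofZLatticeBasis_span ℝ
    have h4 : Submodule.map (f.restrictScalars ℤ)
        (Submodule.span ℤ (Set.range (bU : ι → ↥U))) = L := by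
      rw [h3, hL₀, Submodule.map_comap_eq_self]
      exact fun x hx ↦ LinearMap.mem_range.mpr ⟨⟨x, Submodule.subset_span hx⟩, rfl⟩
    rw [← h4, Submodule.map_span]
    congr 1
    ext x
    constructor
    · rintro ⟨i, rfl⟩
      exact ⟨bU i, ⟨i, rfl⟩, rfl⟩
    · rintro ⟨y, hy, rfl⟩
      obtain ⟨i, rfl⟩ := hy
      exact ⟨i, rfl⟩
  · rw [(finrank_eq_card_basis bU).symm]

set_option maxHeartbeats 1000000 in
set_option synthInstance.maxHeartbeats 400000 in
/-- If `G` is an irreducible finite subgroup of `GL(V)` admitting a nonzero invariant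
lattice, then the field `ℚ(χ_{G,V})` generated over `ℚ` by the traces of the elements of
`G` is either `ℚ` or an imaginary quadratic number field. -/
theorem stmt5 {V : Type*} [NormedAddCommGroup V] [NormedSpace ℂ V] [FiniteDimensional ℂ V]
    (hdim : 1 ≤ Module.finrank ℂ V)
    (G : Subgroup (Module.End ℂ V)ˣ) [Finite G]
    (hirr : ∀ W : Submodule ℂ V,
      (∀ g ∈ G, ∀ v ∈ W, (g : Module.End ℂ V) v ∈ W) → W = ⊥ ∨ W = ⊤)
    (Λ : AddSubgroup V) (hΛne : Λ ≠ ⊥) [DiscreteTopology Λ]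
    (hinv : ∀ g ∈ G, ∀ x ∈ Λ, (g : Module.End ℂ V) x ∈ Λ)
    (F : Subfield ℂ)
    (hF : F = Subfield.closure {z : ℂ | ∃ g ∈ G, z = LinearMap.trace ℂ V (g : Module.End ℂ V)}) :
    F = ⊥ ∨ (Module.finrank ℚ F = 2 ∧ ∃ z ∈ F, z.im ≠ 0) := by
  classical
  haveI : Nontrivial V := by
    rcases Module.finrank_pos_iff (R := ℂ) (M := V) |>.mp (lt_of_lt_of_le zero_lt_one hdim) with h
    exact h
  -- scalar restriction instances
  letI : NormedSpace ℝ V := NormedSpace.restrictScalars ℝ ℂ V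
  haveI : IsScalarTower ℝ ℂ V := inferInstance
  haveI : FiniteDimensional ℝ V := FiniteDimensional.trans ℝ ℂ V
  letI : Module ℚ V := Module.compHom V (algebraMap ℚ ℝ)
  have hQsmul : ∀ (q : ℚ) (x : V), q • x = ((q : ℝ)) • x := fun _ _ => rfl
  haveI hQRV : IsScalarTower ℚ ℝ V := ⟨fun q r x => by
    rw [hQsmul, Rat.smul_def, mul_smul]⟩
  haveI hQCV : IsScalarTower ℚ ℂ V := ⟨fun q c x => by
    rw [Rat.smul_def, mul_smul, hQsmul, ← algebraMap_smul ℂ ((q : ℝ)) (c • x),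
      Complex.coe_algebraMap]
    norm_cast⟩
  have hQsmulC : ∀ (q : ℚ) (x : V), q • x = ((q : ℂ)) • x := fun q x => by
    rw [hQsmul, ← algebraMap_smul ℂ ((q : ℝ)) x, Complex.coe_algebraMap]
    norm_cast
  letI : Algebra ℚ (Module.End ℂ V) :=
    RingHom.toAlgebra' ((algebraMap ℂ (Module.End ℂ V)).comp (algebraMap ℚ ℂ))
      (fun q x => by simpa using Algebra.commutes ((q : ℚ) : ℂ) x)
  haveI : IsScalarTower ℚ ℂ (Module.End ℂ V) := IsScalarTower.of_algebraMap_eq fun q => rfl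
  obtain ⟨Ks, hKtr, hKact⟩ := @aux_traceField V _ _ _ _ G _ hirr _
    (IsScalarTower.of_algebraMap_eq fun q => rfl)
  have hFKs : F ≤ Ks := by
    rw [hF]
    refine Subfield.closure_le.mpr ?_
    rintro z ⟨g, hg, rfl⟩
    exact hKtr ⟨g, hg⟩
  -- the ℂ-span of Λ is everything
  have hspanC : Submodule.span ℂ (Λ : Set V) = ⊤ := by
    have hGinv : ∀ g ∈ G, ∀ x ∈ Submodule.span ℂ (Λ : Set V),
        (g : Module.End ℂ V) x ∈ Submodule.span ℂ (Λ : Set V) := by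
      intro g hg x hx
      induction hx using Submodule.span_induction with
      | mem y hy => exact Submodule.subset_span (hinv g hg y hy)
      | zero => simp
      | add a b _ _ ha hb => rw [map_add]; exact Submodule.add_mem _ ha hb
      | smul c a _ ha => rw [map_smul]; exact Submodule.smul_mem _ _ ha
    rcases hirr (Submodule.span ℂ (Λ : Set V)) hGinv with h | h
    · exfalso
      apply hΛne
      ext x
      simp only [AddSubgroup.mem_bot]
      constructor
      · intro hx
        have : x ∈ (⊥ : Submodule ℂ V) := h ▸ Submodule.subset_span hx
        simpa using this
      · rintro rfl; exact Λ.zero_mem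
    · exact h
  set W : Submodule ℚ V := Submodule.span ℚ (Λ : Set V) with hW
  -- stability of W under the ℚ-span of G
  have hstab : ∀ a ∈ Submodule.span ℚ
      (Set.range (fun k : ↥G => ((k : (Module.End ℂ V)ˣ) : Module.End ℂ V))),
      ∀ x ∈ W, a x ∈ W := by
    intro a ha
    induction ha using Submodule.span_induction with
    | mem y hy =>
      obtain ⟨k, rfl⟩ := hy
      intro x hx
      induction hx using Submodule.span_induction with
      | mem w hw => exact Submodule.subset_span (hinv _ k.2 w hw)
      | zero => simp
      | add a b _ _ ha hb => rw [map_add]; exact Submodule.add_mem _ ha hb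
      | smul q w _ hw =>
        rw [hQsmulC, map_smul, ← hQsmulC]
        exact W.smul_mem q hw
    | zero => intro x hx; simpa using W.zero_mem
    | add a b _ _ ha hb =>
      intro x hx
      rw [LinearMap.add_apply]
      exact W.add_mem (ha x hx) (hb x hx)
    | smul q a _ ha =>
      intro x hx
      have hqa : q • a = (q : ℂ) • a := by
        ext y
        show q • a y = (q : ℂ) • a y
        exact hQsmulC q (a y)
      rw [hqa, LinearMap.smul_apply, ← hQsmulC]
      exact W.smul_mem q (ha x hx)
  have hFW : ∀ z : ℂ, z ∈ F → ∀ x ∈ W, z • x ∈ W := by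
    intro z hz x hx
    have h2 := hstab _ (hKact z (hFKs hz)) x hx
    simpa using h2
  -- the lattice basis
  obtain ⟨ι, hFin, v, hvΛ, hvR, hvZ, hvcard⟩ := aux_lattice Λ
  haveI := hFin
  have hvcard' : Fintype.card ι = finrank ℝ ↥(Submodule.span ℝ (Λ : Set V)) := by
    convert hvcard
  have hvQ : LinearIndependent ℚ v := hvR.restrict_scalars (by
    intro a b hab
    have : ((a : ℝ)) = ((b : ℝ)) := by simpa [Rat.smul_def] using hab
    exact_mod_cast this)
  have hWv : W = Submodule.span ℚ (Set.range v) := by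
    apply le_antisymm
    · rw [hW, Submodule.span_le]
      intro x hx
      have hx' : x ∈ Submodule.span ℤ (Set.range v) := by
        rw [hvZ]
        exact hx
      exact Submodule.span_subset_span ℤ ℚ _ hx'
    · rw [Submodule.span_le]
      rintro y ⟨i, rfl⟩
      exact Submodule.subset_span (hvΛ i)
  have hrW : finrank ℚ ↥W = Fintype.card ι := by
    rw [hWv, finrank_span_eq_card hvQ]
  haveI hWfd : FiniteDimensional ℚ ↥W := by
    rw [hWv]
    exact FiniteDimensional.span_of_finite ℚ (Set.finite_range v)
  -- W as an F-module
  have e1 : ∀ (y : ↥F) (xx : V), y • xx = (y : ℂ) • xx := fun _ _ => rfl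
  have ecast : ∀ (q : ℚ) (f : ↥F), ((q • f : ↥F) : ℂ) = (q : ℂ) * (f : ℂ) := by
    intro q f
    rw [Rat.smul_def]
    push_cast
    ring
  haveI hQFV : IsScalarTower ℚ ↥F V := ⟨fun q f x => by
    calc (q • f) • x = ((q • f : ↥F) : ℂ) • x := e1 _ _
      _ = ((q : ℂ) * (f : ℂ)) • x := by rw [ecast]
      _ = (q : ℂ) • ((f : ℂ) • x) := mul_smul _ _ _
      _ = q • ((f : ℂ) • x) := (hQsmulC _ _).symm
      _ = q • (f • x) := by rw [e1]⟩
  set WF : Submodule ↥F V := Submodule.span ↥F (Λ : Set V) with hWF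
  have hWFset : (WF : Set V) = (W : Set V) := by
    apply Set.Subset.antisymm
    · intro x hx
      induction hx using Submodule.span_induction with
      | mem y hy => exact Submodule.subset_span hy
      | zero => exact W.zero_mem
      | add a b _ _ ha hb => exact W.add_mem ha hb
      | smul z w _ hw =>
        rw [e1]
        exact hFW (z : ℂ) z.2 w hw
    · intro x hx
      induction hx using Submodule.span_induction with
      | mem y hy => exact Submodule.subset_span hy
      | zero => exact WF.zero_mem
      | add a b _ _ ha hb => exact WF.add_mem ha hb
      | smul q w _ hw =>
        show q • w ∈ WF
        rw [← algebraMap_smul ↥F q w]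
        exact WF.smul_mem _ hw
  have hres : WF.restrictScalars ℚ = W := SetLike.ext' (by
    rw [Submodule.coe_restrictScalars]
    exact hWFset)
  set eWF := (Submodule.restrictScalarsEquiv ℚ (↥F) V WF).restrictScalars ℚ with heWF
  have e2 : finrank ℚ ↥(WF.restrictScalars ℚ) = finrank ℚ ↥WF := eWF.finrank_eq
  have e3 : finrank ℚ ↥(WF.restrictScalars ℚ) = finrank ℚ ↥W :=
    (LinearEquiv.ofEq _ _ hres).finrank_eq
  haveI : FiniteDimensional ℚ ↥(WF.restrictScalars ℚ) :=
    Module.Finite.equiv (LinearEquiv.ofEq _ _ hres).symm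
  haveI : FiniteDimensional ℚ ↥WF := Module.Finite.equiv eWF
  haveI : FiniteDimensional ↥F ↥WF := Module.Finite.right ℚ ↥F ↥WF
  have hdm : finrank ℚ ↥F * finrank ↥F ↥WF = Fintype.card ι := by
    rw [Module.finrank_mul_finrank ℚ ↥F ↥WF, ← e2, e3, hrW]
  -- basis of WF over F and its image in V
  set m := finrank ↥F ↥WF with hm
  set bF := Module.finBasis ↥F ↥WF with hbF
  set cvec : Fin m → V := fun j => ((bF j : ↥WF) : V) with hcvec
  have hΛexp : ∀ x, ∀ hx : x ∈ WF,
      x = ∑ j, ((bF.repr ⟨x, hx⟩ j : ↥F) : ℂ) • cvec j := by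
    intro x hx
    have h0 := bF.sum_repr ⟨x, hx⟩
    have h1 := congrArg (WF.subtype) h0
    rw [map_sum] at h1
    simp only [map_smul] at h1
    calc x = ∑ j, (bF.repr ⟨x, hx⟩ j) • ((bF j : ↥WF) : V) := h1.symm
      _ = ∑ j, ((bF.repr ⟨x, hx⟩ j : ↥F) : ℂ) • cvec j :=
        Finset.sum_congr rfl (fun j _ => e1 _ _)
  have hΛWF : ∀ x ∈ Λ, x ∈ WF := fun x hx => Submodule.subset_span hx
  -- n ≤ m
  have hspancv : Submodule.span ℂ (Set.range cvec) = ⊤ := by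
    apply top_unique
    rw [← hspanC, Submodule.span_le]
    intro x hx
    rw [hΛexp x (hΛWF x hx)]
    exact Submodule.sum_mem _ (fun j _ =>
      Submodule.smul_mem _ _ (Submodule.subset_span ⟨j, rfl⟩))
  have hnm : finrank ℂ V ≤ m := by
    haveI : Fintype ↥(Set.range cvec) := (Set.finite_range cvec).fintype
    have h5 : finrank ℂ ↥(Submodule.span ℂ (Set.range cvec)) ≤ (Set.range cvec).toFinset.card :=
      finrank_span_le_card (Set.range cvec)
    have h6 : (Set.range cvec).toFinset.card ≤ m := by
      rw [Set.toFinset_card]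
      simpa using Fintype.card_range_le cvec
    calc finrank ℂ V = finrank ℂ ↥(⊤ : Submodule ℂ V) := (finrank_top ℂ V).symm
      _ = finrank ℂ ↥(Submodule.span ℂ (Set.range cvec)) := by rw [hspancv]
      _ ≤ (Set.range cvec).toFinset.card := h5
      _ ≤ m := h6
  -- r ≤ 2n
  have hr2n : Fintype.card ι ≤ 2 * finrank ℂ V := by
    have h7 : finrank ℝ ℂ * finrank ℂ V = finrank ℝ V := Module.finrank_mul_finrank ℝ ℂ V
    rw [Complex.finrank_real_complex] at h7
    rw [hvcard', h7]
    exact Submodule.finrank_le _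
  have hm1 : 1 ≤ m := le_trans hdim hnm
  have hd2 : finrank ℚ ↥F ≤ 2 := by
    have : finrank ℚ ↥F * m ≤ 2 * m :=
      hdm ▸ le_trans hr2n (by exact Nat.mul_le_mul_left 2 hnm)
    exact Nat.le_of_mul_le_mul_right this (lt_of_lt_of_le Nat.zero_lt_one hm1)
  have hd1 : 1 ≤ finrank ℚ ↥F := by
    obtain ⟨x, hxΛ, hxne⟩ : ∃ x ∈ Λ, x ≠ 0 := by
      by_contra hc
      push_neg at hc
      exact hΛne (by
        ext y
        simp only [AddSubgroup.mem_bot]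
        exact ⟨fun hy => hc y hy, fun hy => hy ▸ Λ.zero_mem⟩)
    have hWnt : Nontrivial ↥W := ⟨⟨x, Submodule.subset_span hxΛ⟩, 0, by
      simp only [ne_eq, Submodule.mk_eq_zero]
      exact hxne⟩
    have : 0 < finrank ℚ ↥W := Module.finrank_pos_iff.mpr hWnt
    rw [hrW] at this
    by_contra hcon
    push_neg at hcon
    interval_cases h : finrank ℚ ↥F
    omega
  have hd12 : finrank ℚ ↥F = 1 ∨ finrank ℚ ↥F = 2 := by omega
  rcases hd12 with hd | hd
  · left
    refine le_antisymm ?_ bot_le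
    intro x hx
    have hone : (⟨1, F.one_mem⟩ : ↥F) ≠ 0 := by
      intro hcon
      have := congrArg (Subtype.val) hcon
      simpa using this
    obtain ⟨q, hq⟩ := (finrank_eq_one_iff_of_nonzero' (⟨1, F.one_mem⟩ : ↥F) hone).mp hd ⟨x, hx⟩
    have hxq : x = ((q : ℚ) : ℂ) := by
      have h11 := congrArg (Subtype.val) hq
      have h12 : ((q • (⟨1, F.one_mem⟩ : ↥F) : ↥F) : ℂ) = x := h11
      rw [ecast] at h12
      simpa using h12.symm
    rw [hxq]
    exact SubfieldClass.ratCast_mem (⊥ : Subfield ℂ) q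
  · right
    refine ⟨hd, ?_⟩
    by_contra hno
    push_neg at hno
    have hUle : Submodule.span ℝ (Λ : Set V) ≤ Submodule.span ℝ (Set.range cvec) := by
      rw [Submodule.span_le]
      intro x hx
      rw [hΛexp x (hΛWF x hx)]
      refine Submodule.sum_mem _ (fun j _ => ?_)
      set a : ↥F := bF.repr ⟨x, hΛWF x hx⟩ j with ha
      have hare : ((a : ℂ)) = (((a : ℂ).re : ℝ) : ℂ) := by
        apply Complex.ext
        · simp
        · simpa using hno _ a.2
      have hsm : ((a : ℂ)) • cvec j = ((a : ℂ).re : ℝ) • cvec j := by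
        rw [← algebraMap_smul ℂ ((a : ℂ).re : ℝ) (cvec j), Complex.coe_algebraMap, ← hare]
      rw [hsm]
      exact Submodule.smul_mem _ _ (Submodule.subset_span ⟨j, rfl⟩)
    have hrm : Fintype.card ι ≤ m := by
      haveI : Fintype ↥(Set.range cvec) := (Set.finite_range cvec).fintype
      have h8 : finrank ℝ ↥(Submodule.span ℝ (Λ : Set V)) ≤
          finrank ℝ ↥(Submodule.span ℝ (Set.range cvec)) := Submodule.finrank_mono hUle
      have h9 : finrank ℝ ↥(Submodule.span ℝ (Set.range cvec)) ≤ (Set.range cvec).toFinset.card :=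
        finrank_span_le_card _
      have h10 : (Set.range cvec).toFinset.card ≤ m := by
        rw [Set.toFinset_card]
        simpa using Fintype.card_range_le cvec
      rw [hvcard']
      omega
    rw [hd] at hdm
    omega
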